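/- Let p > 0, α ∈ (0, 1/p], and let R₁, R₂ be i.i.d. positive random variables whose common density g satisfies g(x) ≥ (p/4)·𝟙_{[1-1/(2p),1]}(x). Then P(R₁ ≤ 1 and |R₁ - R₂| < α) ≥ (p²α/16)·(1/p - α) if α ≤ 1/(2p), and P(R₁ ≤ 1 and |R₁ - R₂| < α) ≥ 1/64 if α > 1/(2p). In particular, when α ≤ 1/(2p) the probability is at least pα/32. -/

import Mathlib

open Real MeasureTheory ProbabilityTheory

theorem probability_strip_bound {Ω : Type*} [MeasurableSpace Ω] (μ : Measure Ω)
    [IsProbabilityMeasure μ] (p α : ℝ) (hp : 0 < p) (hα : α ∈ Set.Ioc 0 (1 / p))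
    (g : ℝ → ℝ) (R₁ R₂ : Ω → ℝ)
    (hpos₁ : ∀ ω, 0 < R₁ ω) (hpos₂ : ∀ ω, 0 < R₂ ω)
    (hindep : IndepFun R₁ R₂ μ)
    (hd₁ : Measure.map R₁ μ = volume.withDensity (fun x => ENNReal.ofReal (g x)))
    (hd₂ : Measure.map R₂ μ = volume.withDensity (fun x => ENNReal.ofReal (g x)))
    (hg : ∀ x, (Set.Icc (1 - 1 / (2 * p)) 1).indicator (fun _ => p / 4) x ≤ g x) :
    (α ≤ 1 / (2 * p) →
      ENNReal.ofReal (p ^ 2 * α / 16 * (1 / p - α)) ≤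
        μ {ω | R₁ ω ≤ 1 ∧ |R₁ ω - R₂ ω| < α} ∧
      ENNReal.ofReal (p * α / 32) ≤ μ {ω | R₁ ω ≤ 1 ∧ |R₁ ω - R₂ ω| < α}) ∧
    (1 / (2 * p) < α →
      ENNReal.ofReal (1 / 64) ≤ μ {ω | R₁ ω ≤ 1 ∧ |R₁ ω - R₂ ω| < α}) := by
  obtain ⟨hα0, hα1⟩ := hα
  set L : ℝ := 1 / (2 * p) with hL
  have hLpos : 0 < L := by rw [hL]; positivity
  have hpL : p * L = 1 / 2 := by rw [hL]; field_simp
  set a : ℝ := 1 - L with ha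
  set β : ℝ := min α L with hβ
  have hβpos : 0 < β := lt_min hα0 hLpos
  have hβα : β ≤ α := min_le_left _ _
  have hβL : β ≤ L := min_le_right _ _
  set I : Set ℝ := Set.Icc a 1 with hI
  have hIm : MeasurableSet I := measurableSet_Icc
  set ν : Measure ℝ := volume.withDensity (fun x => ENNReal.ofReal (g x)) with hν
  set c : ENNReal := ENNReal.ofReal (p / 4) with hc
  have hcne : c ≠ ⊤ := ENNReal.ofReal_ne_top
  set m : Measure ℝ := c • volume.restrict I with hm
  -- m ≤ ν
  have hle : m ≤ ν := by
    rw [Measure.le_iff]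
    intro s hs
    have h1 : m s = c * volume (s ∩ I) := by
      rw [hm, Measure.smul_apply, Measure.restrict_apply hs]; rfl
    have h2 : ∫⁻ x in s, I.indicator (fun _ => c) x ∂volume = c * volume (s ∩ I) := by
      rw [lintegral_indicator hIm, setLIntegral_const,
        Measure.restrict_apply hIm, Set.inter_comm]
    rw [hν, withDensity_apply _ hs, h1, ← h2]
    apply lintegral_mono
    intro x
    by_cases hx : x ∈ I
    · have hgx := hg x
      rw [Set.indicator_of_mem hx] at hgx ⊢
      exact ENNReal.ofReal_le_ofReal hgx
    · rw [Set.indicator_of_notMem hx]; exact zero_le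
  have hcpos : 0 < c := ENNReal.ofReal_pos.mpr (by positivity)
  have hνI : c * ENNReal.ofReal L ≤ ν I := by
    have := Measure.le_iff.mp hle I hIm
    refine le_trans (le_of_eq ?_) this
    rw [hm, Measure.smul_apply, Measure.restrict_apply hIm, Set.inter_self, hI,
      Real.volume_Icc, smul_eq_mul]
    congr 1
    rw [ha]; ring_nf
  have hν0 : ν ≠ 0 := by
    intro h
    rw [h] at hνI
    simp only [Measure.coe_zero, Pi.zero_apply, nonpos_iff_eq_zero, mul_eq_zero] at hνI
    rcases hνI with h' | h'
    · exact absurd h' hcpos.ne'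
    · exact absurd h' (ENNReal.ofReal_pos.mpr hLpos).ne'
  have hm1 : AEMeasurable R₁ μ := by
    by_contra h
    rw [Measure.map_of_not_aemeasurable h] at hd₁
    exact hν0 hd₁.symm
  have hm2 : AEMeasurable R₂ μ := by
    by_contra h
    rw [Measure.map_of_not_aemeasurable h] at hd₂
    exact hν0 hd₂.symm
  have hpair : AEMeasurable (fun ω => (R₁ ω, R₂ ω)) μ := hm1.prodMk hm2
  have hprob : IsProbabilityMeasure ν := by
    rw [← hd₁]; exact Measure.isProbabilityMeasure_map hm1
  set S : Set (ℝ × ℝ) := {q : ℝ × ℝ | q.1 ≤ 1 ∧ |q.1 - q.2| < α} with hSdef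
  have hS : MeasurableSet S :=
    (measurableSet_le measurable_fst measurable_const).inter
      ((isOpen_lt (continuous_abs.comp (continuous_fst.sub continuous_snd))
        continuous_const).measurableSet)
  have hmap : μ.map (fun ω => (R₁ ω, R₂ ω)) = ν.prod ν := by
    rw [(indepFun_iff_map_prod_eq_prod_map_map hm1 hm2).mp hindep, hd₁, hd₂]
  have key : μ {ω | R₁ ω ≤ 1 ∧ |R₁ ω - R₂ ω| < α} = (ν.prod ν) S := by
    rw [← hmap, Measure.map_apply_of_aemeasurable hpair hS]
    rfl
  -- section lower bound
  have hsec : ∀ x ∈ I,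
      c * (ENNReal.ofReal (min (x - a) β) + ENNReal.ofReal (min (1 - x) β))
        ≤ m (Prod.mk x ⁻¹' S) := by
    intro x hx
    obtain ⟨hxa, hx1⟩ := hx
    have hmsec : m (Prod.mk x ⁻¹' S) = c * volume ((Prod.mk x ⁻¹' S) ∩ I) := by
      rw [hm, Measure.smul_apply, Measure.restrict_apply (measurable_prodMk_left hS)]
      rfl
    rw [hmsec]
    apply mul_le_mul_right
    have hsub : Set.Ioc (max a (x - β)) x ∪ Set.Ioo x (min 1 (x + β))
        ⊆ (Prod.mk x ⁻¹' S) ∩ I := by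
      rintro y (⟨h1, h2⟩ | ⟨h1, h2⟩)
      · refine ⟨⟨hx1, ?_⟩, le_trans (le_max_left _ _) h1.le, le_trans h2 hx1⟩
        rw [abs_lt]
        constructor
        · have := le_max_right a (x - β); linarith
        · have := le_max_right a (x - β); linarith
      · refine ⟨⟨hx1, ?_⟩, le_trans hxa h1.le, le_trans h2.le (min_le_left _ _)⟩
        rw [abs_lt]
        have h2' : y < x + β := lt_of_lt_of_le h2 (min_le_right _ _)
        constructor <;> [linarith; linarith]
    have hdisj : Disjoint (Set.Ioc (max a (x - β)) x) (Set.Ioo x (min 1 (x + β))) := by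
      apply Set.disjoint_left.mpr
      rintro y ⟨_, h2⟩ ⟨h3, _⟩
      exact absurd h2 (not_le.mpr h3)
    have hU : volume (Set.Ioc (max a (x - β)) x) = ENNReal.ofReal (min (x - a) β) := by
      rw [Real.volume_Ioc]
      congr 1
      rcases le_total a (x - β) with h | h
      · rw [max_eq_right h, min_eq_right (by linarith)]; ring
      · rw [max_eq_left h, min_eq_left (by linarith)]
    have hV : volume (Set.Ioo x (min 1 (x + β))) = ENNReal.ofReal (min (1 - x) β) := by
      rw [Real.volume_Ioo]
      congr 1
      rcases le_total 1 (x + β) with h | h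
      · rw [min_eq_left h, min_eq_left (by linarith)]
      · rw [min_eq_right h, min_eq_right (by linarith)]; ring
    calc ENNReal.ofReal (min (x - a) β) + ENNReal.ofReal (min (1 - x) β)
        = volume (Set.Ioc (max a (x - β)) x ∪ Set.Ioo x (min 1 (x + β))) := by
          rw [measure_union hdisj measurableSet_Ioo, hU, hV]
      _ ≤ volume ((Prod.mk x ⁻¹' S) ∩ I) := measure_mono hsub
  -- the two one-dimensional integrals
  have hmeas1 : Measurable fun x => ENNReal.ofReal (min (x - a) β) := by fun_prop
  have hmeas2 : Measurable fun x => ENNReal.ofReal (min (1 - x) β) := by fun_prop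
  have hJ2 : ∫⁻ x in I, ENNReal.ofReal (min (x - a) β) ∂volume
      = ENNReal.ofReal (β ^ 2 / 2) + ENNReal.ofReal β * ENNReal.ofReal (L - β) := by
    have hsplit : I = Set.Icc a (a + β) ∪ Set.Ioc (a + β) 1 :=
      (Set.Icc_union_Ioc_eq_Icc (by linarith) (by rw [ha]; linarith)).symm
    have hdisj : Disjoint (Set.Icc a (a + β)) (Set.Ioc (a + β) 1) := by
      apply Set.disjoint_left.mpr
      rintro y ⟨_, h2⟩ ⟨h3, _⟩
      exact absurd h2 (not_le.mpr h3)
    rw [hsplit, lintegral_union measurableSet_Ioc hdisj]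
    congr 1
    · have hcong : ∫⁻ x in Set.Icc a (a + β), ENNReal.ofReal (min (x - a) β) ∂volume
          = ∫⁻ x in Set.Icc a (a + β), ENNReal.ofReal (x - a) ∂volume := by
        apply setLIntegral_congr_fun measurableSet_Icc
        intro x hx
        dsimp only
        rw [min_eq_left (by linarith [hx.2])]
      have hint2 : IntegrableOn (fun x => x - a) (Set.Icc a (a + β)) volume :=
        (continuous_id.sub continuous_const).integrableOn_Icc
      have hnn2 : (0 : ℝ → ℝ) ≤ᶠ[ae (volume.restrict (Set.Icc a (a + β)))] fun x => x - a := by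
        filter_upwards [ae_restrict_mem measurableSet_Icc] with x hx
        simpa using sub_nonneg.mpr hx.1
      have hIeq := ofReal_integral_eq_lintegral_ofReal hint2 hnn2
      rw [hcong, ← hIeq]
      congr 1
      rw [integral_Icc_eq_integral_Ioc, ← intervalIntegral.integral_of_le (by linarith),
        intervalIntegral.integral_sub intervalIntegral.intervalIntegrable_id
          intervalIntegrable_const, integral_id, intervalIntegral.integral_const]
      simp only [smul_eq_mul]
      ring
    · have hcong : ∫⁻ x in Set.Ioc (a + β) 1, ENNReal.ofReal (min (x - a) β) ∂volume
          = ∫⁻ x in Set.Ioc (a + β) 1, ENNReal.ofReal β ∂volume := by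
        apply setLIntegral_congr_fun measurableSet_Ioc
        intro x hx
        dsimp only
        rw [min_eq_right (by linarith [hx.1])]
      rw [hcong, setLIntegral_const, Real.volume_Ioc]
      congr 1
      rw [ha]; ring
  have hJ1 : ∫⁻ x in I, ENNReal.ofReal (min (1 - x) β) ∂volume
      = ENNReal.ofReal β * ENNReal.ofReal (L - β) + ENNReal.ofReal (β ^ 2 / 2) := by
    have hsplit : I = Set.Ico a (1 - β) ∪ Set.Icc (1 - β) 1 :=
      (Set.Ico_union_Icc_eq_Icc (by rw [ha]; linarith) (by linarith)).symm
    have hdisj : Disjoint (Set.Ico a (1 - β)) (Set.Icc (1 - β) 1) := by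
      apply Set.disjoint_left.mpr
      rintro y ⟨_, h2⟩ ⟨h3, _⟩
      exact absurd h3 (not_le.mpr h2)
    rw [hsplit, lintegral_union measurableSet_Icc hdisj]
    congr 1
    · have hcong : ∫⁻ x in Set.Ico a (1 - β), ENNReal.ofReal (min (1 - x) β) ∂volume
          = ∫⁻ x in Set.Ico a (1 - β), ENNReal.ofReal β ∂volume := by
        apply setLIntegral_congr_fun measurableSet_Ico
        intro x hx
        dsimp only
        rw [min_eq_right (by linarith [hx.2])]
      rw [hcong, setLIntegral_const, Real.volume_Ico]
      congr 1
      rw [ha]; ring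
    · have hcong : ∫⁻ x in Set.Icc (1 - β) 1, ENNReal.ofReal (min (1 - x) β) ∂volume
          = ∫⁻ x in Set.Icc (1 - β) 1, ENNReal.ofReal (1 - x) ∂volume := by
        apply setLIntegral_congr_fun measurableSet_Icc
        intro x hx
        dsimp only
        rw [min_eq_left (by linarith [hx.1])]
      have hint1 : IntegrableOn (fun x => 1 - x) (Set.Icc (1 - β) 1) volume :=
        (continuous_const.sub continuous_id).integrableOn_Icc
      have hnn1 : (0 : ℝ → ℝ) ≤ᶠ[ae (volume.restrict (Set.Icc (1 - β) 1))] fun x => 1 - x := by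
        filter_upwards [ae_restrict_mem measurableSet_Icc] with x hx
        simpa using hx.2
      have hIeq := ofReal_integral_eq_lintegral_ofReal hint1 hnn1
      rw [hcong, ← hIeq]
      congr 1
      rw [integral_Icc_eq_integral_Ioc, ← intervalIntegral.integral_of_le (by linarith),
        intervalIntegral.integral_sub intervalIntegrable_const
          intervalIntegral.intervalIntegrable_id, integral_id,
        intervalIntegral.integral_const]
      simp only [smul_eq_mul]
      ring
  -- main chain
  have total : ENNReal.ofReal ((p / 4) * ((p / 4) * (β * (2 * L - β))))
      ≤ μ {ω | R₁ ω ≤ 1 ∧ |R₁ ω - R₂ ω| < α} := by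
    rw [key, Measure.prod_apply hS]
    calc ENNReal.ofReal ((p / 4) * ((p / 4) * (β * (2 * L - β))))
        = c * (c * (ENNReal.ofReal (β ^ 2 / 2) + ENNReal.ofReal β * ENNReal.ofReal (L - β)
            + (ENNReal.ofReal β * ENNReal.ofReal (L - β) + ENNReal.ofReal (β ^ 2 / 2)))) := by
          have hq : (0:ℝ) ≤ p / 4 := by linarith
          have hnnA : (0:ℝ) ≤ β ^ 2 / 2 := by positivity
          have hnnB : (0:ℝ) ≤ β * (L - β) := mul_nonneg hβpos.le (by linarith)
          have e1 : p / 4 * (p / 4 * (β * (2 * L - β)))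
              = p / 4 * (p / 4 * ((β ^ 2 / 2 + β * (L - β)) + (β * (L - β) + β ^ 2 / 2))) := by
            ring
          rw [hc, e1, ENNReal.ofReal_mul hq, ENNReal.ofReal_mul hq,
            ENNReal.ofReal_add (by linarith) (by linarith),
            ENNReal.ofReal_add hnnA hnnB, ENNReal.ofReal_add hnnB hnnA]
          simp only [ENNReal.ofReal_mul hβpos.le]
      _ = c * ∫⁻ x in I, c * (ENNReal.ofReal (min (x - a) β)
            + ENNReal.ofReal (min (1 - x) β)) ∂volume := by
          rw [lintegral_const_mul' _ _ hcne, lintegral_add_left hmeas1, hJ2, hJ1]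
      _ ≤ c * ∫⁻ x in I, m (Prod.mk x ⁻¹' S) ∂volume := by
          apply mul_le_mul_right
          apply lintegral_mono_ae
          rw [ae_restrict_iff' hIm]
          exact Filter.Eventually.of_forall hsec
      _ = ∫⁻ x, m (Prod.mk x ⁻¹' S) ∂m := by
          rw [hm, lintegral_smul_measure, smul_eq_mul]
      _ ≤ ∫⁻ x, ν (Prod.mk x ⁻¹' S) ∂ν :=
          lintegral_mono' hle fun x => Measure.le_iff'.mp hle _
  have hofr : ∀ r s : ℝ, r ≤ s → ENNReal.ofReal s ≤ μ {ω | R₁ ω ≤ 1 ∧ |R₁ ω - R₂ ω| < α} →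
      ENNReal.ofReal r ≤ μ {ω | R₁ ω ≤ 1 ∧ |R₁ ω - R₂ ω| < α} :=
    fun r s hrs hs => le_trans (ENNReal.ofReal_le_ofReal hrs) hs
  constructor
  · intro hcase
    have hβα' : β = α := min_eq_left hcase
    have h2L : 2 * L = 1 / p := by rw [hL]; field_simp
    constructor
    · refine hofr _ _ ?_ total
      rw [hβα']
      have : 2 * L - α = 1 / p - α := by rw [h2L]
      rw [this]
      ring_nf
      nlinarith [sq_nonneg p]
    · refine hofr _ _ ?_ total
      rw [hβα']
      have hppLα : p * p * L * α = p / 2 * α := by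
        rw [mul_assoc p p L, hpL]; ring
      have hpα : p * α ≤ 1 / 2 := by
        calc p * α ≤ p * L := by nlinarith
          _ = 1 / 2 := hpL
      nlinarith [hppLα, mul_nonneg (mul_pos hp hα0).le (sub_nonneg.mpr hpα)]
  · intro hcase
    have hβL' : β = L := min_eq_right hcase.le
    refine hofr _ _ ?_ total
    rw [hβL']
    nlinarith [hpL]
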